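/- Let Φ be a finite root system in a finite-dimensional real inner product space E with a fixed simple system Δ = {α₁,…,α_r}, and let i ≠ j be indices in {1,…,r}. Then the simple reflection s_{α_j} (given by s_{α_j}(β) = β − (2(β,α_j)/(α_j,α_j))α_j) maps the set {β ∈ Φ : β ≥ α_i} bijectively onto itself, where β ≥ α_i means that β − α_i is a nonnegative linear combination of the simple roots α₁,…,α_r. -/
import Mathlib


open scoped RealInnerProductSpace

/-- The reflection `s_β` in the root `β`: `s_β(χ) = χ − (2(χ,β)/(β,β))·β`. -/
noncomputable def sRefl {E : Type*} [NormedAddCommGroup E] [InnerProductSpace ℝ E]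
    (β χ : E) : E :=
  χ - (2 * ⟪χ, β⟫ / ⟪β, β⟫) • β

/-- `Φ` is a finite root system in `E`: a finite set of nonzero vectors spanning `E` such
that for all `α, β ∈ Φ` the reflection `s_α(β)` lies in `Φ`. -/
def IsRootSystem {E : Type*} [NormedAddCommGroup E] [InnerProductSpace ℝ E]
    (Φ : Finset E) : Prop :=
  (∀ β ∈ Φ, β ≠ 0) ∧ Submodule.span ℝ (Φ : Set E) = ⊤ ∧
    ∀ α ∈ Φ, ∀ β ∈ Φ, sRefl α β ∈ Φ

/-- `α : Fin r → E` is a simple system for `Φ`: a basis of `E` consisting of roots such that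
every root is a linear combination of the `α i` with coefficients all nonnegative or all
nonpositive. -/
def IsSimpleSystem {E : Type*} [NormedAddCommGroup E] [InnerProductSpace ℝ E]
    (Φ : Finset E) {r : ℕ} (α : Fin r → E) : Prop :=
  (∀ i, α i ∈ Φ) ∧ LinearIndependent ℝ α ∧ Submodule.span ℝ (Set.range α) = ⊤ ∧
    ∀ β ∈ Φ, ∃ c : Fin r → ℝ, β = ∑ i, c i • α i ∧ ((∀ i, 0 ≤ c i) ∨ (∀ i, c i ≤ 0))

/-- `β ≥ β'` with respect to the simple system `α`: `β − β'` is a nonnegative linear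
combination of the simple roots. -/
def rootGE {E : Type*} [NormedAddCommGroup E] [InnerProductSpace ℝ E]
    {r : ℕ} (α : Fin r → E) (β β' : E) : Prop :=
  ∃ c : Fin r → ℝ, (∀ i, 0 ≤ c i) ∧ β - β' = ∑ i, c i • α i

lemma sRefl_sRefl {E : Type*} [NormedAddCommGroup E] [InnerProductSpace ℝ E]
    {β : E} (hβ : β ≠ 0) (χ : E) : sRefl β (sRefl β χ) = χ := by
  have hβ2 : ⟪β, β⟫ ≠ 0 := fun h => hβ (inner_self_eq_zero.mp h)
  have h1 : ⟪χ - (2 * ⟪χ, β⟫ / ⟪β, β⟫) • β, β⟫ = -⟪χ, β⟫ := by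
    rw [inner_sub_left, real_inner_smul_left]
    field_simp
    ring
  unfold sRefl
  rw [h1]
  have : 2 * -⟪χ, β⟫ / ⟪β, β⟫ = -(2 * ⟪χ, β⟫ / ⟪β, β⟫) := by ring
  rw [this, neg_smul, sub_neg_eq_add, sub_add_cancel]

/-- **Step in the proof of Lemma 5.1 of the paper.** Let `Φ` be a finite root system with
simple system `α₁,…,α_r`, and let `i ≠ j`. Then the simple reflection `s_{αⱼ}` maps the set
`{β ∈ Φ : β ≥ αᵢ}` bijectively onto itself. -/
theorem simple_reflection_bijOn_roots_ge
    {E : Type*} [NormedAddCommGroup E] [InnerProductSpace ℝ E] [FiniteDimensional ℝ E]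
    (Φ : Finset E) (hΦ : IsRootSystem Φ)
    {r : ℕ} (α : Fin r → E) (hα : IsSimpleSystem Φ α)
    (i j : Fin r) (hij : i ≠ j) :
    Set.BijOn (sRefl (α j))
      {β : E | β ∈ Φ ∧ rootGE α β (α i)} {β : E | β ∈ Φ ∧ rootGE α β (α i)} := by
  obtain ⟨hΦ0, -, hΦrefl⟩ := hΦ
  obtain ⟨hαΦ, hli, -, hsign⟩ := hα
  have hαj0 : α j ≠ 0 := hΦ0 _ (hαΦ j)
  have hδ : ∀ (l : Fin r) (s : ℝ), ∑ k, (if k = l then s else 0) • α k = s • α l := by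
    intro l s
    rw [Finset.sum_eq_single l]
    · simp
    · intro b _ hb; simp [hb]
    · simp
  have hmaps : Set.MapsTo (sRefl (α j))
      {β : E | β ∈ Φ ∧ rootGE α β (α i)} {β : E | β ∈ Φ ∧ rootGE α β (α i)} := by
    rintro β ⟨hβΦ, c, hc0, hcsum⟩
    have hsΦ : sRefl (α j) β ∈ Φ := hΦrefl _ (hαΦ j) _ hβΦ
    refine ⟨hsΦ, ?_⟩
    set t : ℝ := 2 * ⟪β, α j⟫ / ⟪α j, α j⟫ with ht
    have hβeq : β = α i + ∑ k, c k • α k := by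
      rw [← hcsum]; abel
    have hsval : sRefl (α j) β
        = ∑ k, (c k + (if k = i then 1 else 0) - (if k = j then t else 0)) • α k := by
      simp only [sub_smul, add_smul, Finset.sum_sub_distrib, Finset.sum_add_distrib, hδ]
      rw [sRefl, ← ht, hβeq, one_smul]
      abel
    obtain ⟨c', hc'sum, hc'sign⟩ := hsign _ hsΦ
    have hcc : ∀ k, c' k = c k + (if k = i then 1 else 0) - (if k = j then t else 0) := by
      have h0 : ∑ k, (c' k - (c k + (if k = i then 1 else 0) - (if k = j then t else 0))) • α k
          = 0 := by
        simp only [sub_smul, Finset.sum_sub_distrib, ← hc'sum]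
        rw [hsval]
        simp only [sub_smul, add_smul, Finset.sum_sub_distrib, Finset.sum_add_distrib]
        abel
      have h1 := Fintype.linearIndependent_iff.mp hli _ h0
      intro k
      have := h1 k
      linarith [this]
    have hc'i : c' i = c i + 1 := by
      rw [hcc i]
      simp [hij]
    have hc'pos : ∀ k, 0 ≤ c' k := by
      rcases hc'sign with h | h
      · exact h
      · exfalso
        have h2 := h i
        rw [hc'i] at h2
        have := hc0 i
        linarith
    refine ⟨fun k => c' k - (if k = i then 1 else 0), fun k => ?_, ?_⟩
    · by_cases hk : k = i
      · show (0:ℝ) ≤ c' k - if k = i then 1 else 0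
        rw [if_pos hk, hk, hc'i]
        have := hc0 i
        linarith
      · simp only [if_neg hk, sub_zero]
        exact hc'pos k
    · simp only [sub_smul, Finset.sum_sub_distrib, hδ, one_smul, ← hc'sum]
  have hinv : ∀ x, sRefl (α j) (sRefl (α j) x) = x := sRefl_sRefl hαj0
  refine ⟨hmaps, fun x _ y _ hxy => ?_, fun y hy => ⟨sRefl (α j) y, hmaps hy, hinv y⟩⟩
  rw [← hinv x, hxy, hinv y]
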